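/- Let X be a complex Banach space, let Ω be a nonempty bounded open connected subset of ℂ with 0 ∈ Ω, let T ∈ B₁(Ω), and let S ∈ B(X) satisfy T∘S = I. If x₀ is a nonzero vector in ker T, then x₀ is a cyclic vector of S, i.e., the closed linear span of {Sᵏx₀ : k ≥ 0} equals X. -/

import Mathlib

open ContinuousLinearMap Metric

section AuxCD

variable {X : Type*} [NormedAddCommGroup X] [NormedSpace ℂ X] [CompleteSpace X]

/-- A surjective operator with one-dimensional kernel has a continuous right inverse. -/
private lemma exists_right_inverse_clm (W : X →L[ℂ] X) (hsurj : Function.Surjective W)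
    (hfin : Module.finrank ℂ (LinearMap.ker (W : X →ₗ[ℂ] X)) = 1) :
    ∃ R : X →L[ℂ] X, W.comp R = ContinuousLinearMap.id ℂ X := by
  haveI : FiniteDimensional ℂ (LinearMap.ker (W : X →ₗ[ℂ] X)) :=
    FiniteDimensional.of_finrank_pos (by rw [hfin]; norm_num)
  obtain ⟨q, hq_closed, hq⟩ :=
    (Submodule.ClosedComplemented.of_finiteDimensional (LinearMap.ker (W : X →ₗ[ℂ] X))).exists_isClosed_isCompl
  haveI : CompleteSpace q := hq_closed.completeSpace_coe
  set A : q →L[ℂ] X := W.comp q.subtypeL with hA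
  have hker : LinearMap.ker (A : q →ₗ[ℂ] X) = ⊥ := by
    rw [LinearMap.ker_eq_bot']
    intro y hy
    have h1 : (y : X) ∈ LinearMap.ker (W : X →ₗ[ℂ] X) ⊓ q := by
      refine ⟨?_, y.2⟩
      simpa [A] using hy
    rw [hq.inf_eq_bot] at h1
    exact Subtype.ext (by simpa using h1)
  have hrange : LinearMap.range (A : q →ₗ[ℂ] X) = ⊤ := by
    rw [LinearMap.range_eq_top]
    intro z
    obtain ⟨w, hw⟩ := hsurj z
    have hw' : w ∈ LinearMap.ker (W : X →ₗ[ℂ] X) ⊔ q := by rw [hq.sup_eq_top]; trivial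
    obtain ⟨k, hk, y, hyq, rfl⟩ := Submodule.mem_sup.1 hw'
    refine ⟨⟨y, hyq⟩, ?_⟩
    have hk0 : W k = 0 := LinearMap.mem_ker.1 hk
    have h2 : W (k + y) = z := hw
    simp only [map_add, hk0, zero_add] at h2
    simpa [A] using h2
  let E := ContinuousLinearEquiv.ofBijective A hker hrange
  refine ⟨q.subtypeL.comp (E.symm : X →L[ℂ] q), ?_⟩
  ext z
  have h1 : A (E.symm z) = z := by
    have h2 := E.apply_symm_apply z
    rwa [show ⇑E = ⇑A from rfl] at h2
  simpa [A] using h1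

private lemma local_eigen (W R : X →L[ℂ] X) (hWR : W.comp R = ContinuousLinearMap.id ℂ X)
    (x : X) (hx : W x = 0) {t : ℂ} (ht : ‖t • R‖ < 1) :
    (W - t • (1 : X →L[ℂ] X)) (Ring.inverse ((1 : X →L[ℂ] X) - t • R) x) = 0 ∧
      ((1 : X →L[ℂ] X) - t • R) (Ring.inverse ((1 : X →L[ℂ] X) - t • R) x) = x := by
  have hu : IsUnit ((1 : X →L[ℂ] X) - t • R) := isUnit_one_sub_of_norm_lt_one ht
  have h1 : ((1 : X →L[ℂ] X) - t • R) * Ring.inverse ((1 : X →L[ℂ] X) - t • R) = 1 :=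
    Ring.mul_inverse_cancel _ hu
  have h2 : ((1 : X →L[ℂ] X) - t • R) (Ring.inverse ((1 : X →L[ℂ] X) - t • R) x) = x := by
    have h3 := congrArg (fun A : X →L[ℂ] X => A x) h1
    simpa [ContinuousLinearMap.mul_apply] using h3
  refine ⟨?_, h2⟩
  have hWR' : W * R = 1 := hWR
  have key : W - t • (1 : X →L[ℂ] X) = W * ((1 : X →L[ℂ] X) - t • R) := by
    rw [mul_sub, mul_one, mul_smul_comm, hWR']
  have h4 := congrArg (fun A : X →L[ℂ] X => A (Ring.inverse ((1 : X →L[ℂ] X) - t • R) x)) key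
  simp only [ContinuousLinearMap.mul_apply] at h4
  rw [h4, h2, hx]

private lemma analytic_eigen (R : X →L[ℂ] X) (x : X) (f : X →L[ℂ] ℂ) (c : ℂ) {r : ℝ}
    (hr : ∀ t ∈ ball c r, ‖(t - c) • R‖ < 1) :
    AnalyticOnNhd ℂ
      (fun t : ℂ => f (Ring.inverse ((1 : X →L[ℂ] X) - (t - c) • R) x)) (ball c r) := by
  intro t ht
  have hu : IsUnit ((1 : X →L[ℂ] X) - (t - c) • R) := isUnit_one_sub_of_norm_lt_one (hr t ht)
  have h1 : AnalyticAt ℂ (fun s : ℂ => (1 : X →L[ℂ] X) - (s - c) • R) t :=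
    analyticAt_const.sub ((analyticAt_id.sub analyticAt_const).smul analyticAt_const)
  have h2 : AnalyticAt ℂ (Ring.inverse : (X →L[ℂ] X) → (X →L[ℂ] X))
      ((1 : X →L[ℂ] X) - (t - c) • R) := by
    have h := analyticAt_inverse (𝕜 := ℂ) hu.unit
    rwa [hu.unit_spec] at h
  have h3 : AnalyticAt ℂ
      (fun s : ℂ => Ring.inverse ((1 : X →L[ℂ] X) - (s - c) • R)) t :=
    AnalyticAt.comp (𝕜 := ℂ) (g := (Ring.inverse : (X →L[ℂ] X) → (X →L[ℂ] X)))
      (f := fun s : ℂ => (1 : X →L[ℂ] X) - (s - c) • R) (x := t) h2 h1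
  exact ((f.comp ((ContinuousLinearMap.apply ℂ X) x)).analyticAt _).comp h3

end AuxCD

/-- The Cowen–Douglas class `B₁(Ω)`: `Ω ⊆ σ(T)`; the closed linear span of
`⋃_{λ∈Ω} ker(T − λ)` is all of `X`; `T − λ` is surjective for every `λ ∈ Ω`; and
`dim ker(T − λ) = 1` for every `λ ∈ Ω`. -/
def MemCowenDouglasOne {X : Type*} [NormedAddCommGroup X] [NormedSpace ℂ X]
    (Ω : Set ℂ) (T : X →L[ℂ] X) : Prop :=
  Ω ⊆ spectrum ℂ T ∧
  (Submodule.span ℂ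
      (⋃ μ ∈ Ω, ((LinearMap.ker ((T - μ • (1 : X →L[ℂ] X) : X →L[ℂ] X) : X →ₗ[ℂ] X) : Submodule ℂ X) : Set X))
    ).topologicalClosure = ⊤ ∧
  (∀ μ ∈ Ω, Function.Surjective (T - μ • (1 : X →L[ℂ] X))) ∧
  (∀ μ ∈ Ω, Module.finrank ℂ (LinearMap.ker ((T - μ • (1 : X →L[ℂ] X) : X →L[ℂ] X) : X →ₗ[ℂ] X)) = 1)

set_option maxHeartbeats 1000000 in
/-- Let `Ω` be a nonempty bounded open connected subset of `ℂ` with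
`0 ∈ Ω`, let `T ∈ B₁(Ω)` and let `S ∈ B(X)` satisfy `T ∘ S = I`. If `x₀` is a nonzero
vector in `ker T`, then `x₀` is a cyclic vector of `S`: the closed linear span of
`{Sᵏx₀ : k ≥ 0}` equals `X`. -/
theorem ker_vector_is_cyclic_for_right_inverse
    (X : Type*) [NormedAddCommGroup X] [NormedSpace ℂ X] [CompleteSpace X]
    (Ω : Set ℂ) (hne : Ω.Nonempty) (hbd : Bornology.IsBounded Ω) (hop : IsOpen Ω)
    (hconn : IsConnected Ω) (h0 : (0 : ℂ) ∈ Ω)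
    (T S : X →L[ℂ] X) (hT : MemCowenDouglasOne Ω T)
    (hTS : T.comp S = ContinuousLinearMap.id ℂ X)
    (x₀ : X) (hx₀ : x₀ ≠ 0) (hker : T x₀ = 0) :
    (Submodule.span ℂ (Set.range fun k : ℕ => (S ^ k) x₀)).topologicalClosure = ⊤ := by
  classical
  obtain ⟨-, hdense, hsurj, hfin⟩ := hT
  set M := (Submodule.span ℂ (Set.range fun k : ℕ => (S ^ k) x₀)).topologicalClosure with hM
  have hMclosed : IsClosed (M : Set X) := Submodule.isClosed_topologicalClosure _
  -- spanning helper: any nonzero kernel vector spans the (1-dimensional) kernel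
  have span_ker : ∀ μ ∈ Ω, ∀ y ∈ LinearMap.ker ((T - μ • (1 : X →L[ℂ] X) : X →L[ℂ] X) : X →ₗ[ℂ] X), y ≠ 0 →
      ∀ z ∈ LinearMap.ker ((T - μ • (1 : X →L[ℂ] X) : X →L[ℂ] X) : X →ₗ[ℂ] X), ∃ c : ℂ, z = c • y := by
    intro μ hμ y hyK hy z hzK
    have hy' : (⟨y, hyK⟩ : LinearMap.ker ((T - μ • (1 : X →L[ℂ] X) : X →L[ℂ] X) : X →ₗ[ℂ] X)) ≠ 0 := by
      exact fun h => hy (congrArg Subtype.val h)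
    obtain ⟨c, hc⟩ := (finrank_eq_one_iff_of_nonzero' _ hy').mp (hfin μ hμ) ⟨z, hzK⟩
    exact ⟨c, (congrArg Subtype.val hc).symm⟩
  -- main claim: any functional vanishing on M vanishes
  have claim : ∀ f : X →L[ℂ] ℂ, (∀ y ∈ M, f y = 0) → f = 0 := by
    intro f hf
    set P : ℂ → Prop := fun μ => ∀ y ∈ LinearMap.ker ((T - μ • (1 : X →L[ℂ] X) : X →L[ℂ] X) : X →ₗ[ℂ] X), f y = 0 with hP
    set U : Set ℂ := {μ | ∃ V : Set ℂ, IsOpen V ∧ μ ∈ V ∧ V ⊆ Ω ∧ ∀ ν ∈ V, P ν} with hUdef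
    have hUopen : IsOpen U := by
      rw [isOpen_iff_forall_mem_open]
      rintro μ ⟨V, hVo, hμV, hVΩ, hVP⟩
      exact ⟨V, fun μ' hμ' => ⟨V, hVo, hμ', hVΩ, hVP⟩, hVo, hμV⟩
    -- the core local argument
    have core : ∀ μ₁ ∈ Ω, ∀ R : X →L[ℂ] X,
        (T - μ₁ • (1 : X →L[ℂ] X)).comp R = ContinuousLinearMap.id ℂ X →
        ∀ x₁ : X, x₁ ≠ 0 → (T - μ₁ • (1 : X →L[ℂ] X)) x₁ = 0 →
        ∀ ρ : ℝ, 0 < ρ → ball μ₁ ρ ⊆ Ω → (∀ t ∈ ball μ₁ ρ, ‖(t - μ₁) • R‖ < 1) →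
        (∃ μ₀ ∈ ball μ₁ ρ, μ₀ ∈ U) → ∀ ν ∈ ball μ₁ ρ, P ν := by
      intro μ₁ hμ₁ R hR x₁ hx₁ hx₁ker ρ hρ hballΩ hsmall hex
      obtain ⟨μ₀, hμ₀D, hμ₀U⟩ := hex
      set y : ℂ → X := fun ν => Ring.inverse ((1 : X →L[ℂ] X) - (ν - μ₁) • R) x₁ with hy
      have heq : ∀ ν : ℂ, T - ν • (1 : X →L[ℂ] X)
          = (T - μ₁ • (1 : X →L[ℂ] X)) - (ν - μ₁) • (1 : X →L[ℂ] X) := by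
        intro ν; rw [sub_smul]; abel
      have hyker : ∀ ν ∈ ball μ₁ ρ, (T - ν • (1 : X →L[ℂ] X)) (y ν) = 0 := by
        intro ν hν
        have h1 := (local_eigen _ R hR x₁ hx₁ker (hsmall ν hν)).1
        rw [heq ν]
        exact h1
      have hyne : ∀ ν ∈ ball μ₁ ρ, y ν ≠ 0 := by
        intro ν hν h0'
        have h1 := (local_eigen _ R hR x₁ hx₁ker (hsmall ν hν)).2
        rw [show Ring.inverse ((1 : X →L[ℂ] X) - (ν - μ₁) • R) x₁ = y ν from rfl, h0',
          map_zero] at h1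
        exact hx₁ h1.symm
      have hgan : AnalyticOnNhd ℂ (fun ν : ℂ => f (y ν)) (ball μ₁ ρ) :=
        analytic_eigen R x₁ f μ₁ hsmall
      have hev : (fun ν : ℂ => f (y ν)) =ᶠ[nhds μ₀] 0 := by
        obtain ⟨V, hVo, hμ₀V, hVΩ, hVP⟩ := hμ₀U
        have hnb : V ∩ ball μ₁ ρ ∈ nhds μ₀ :=
          Filter.inter_mem (hVo.mem_nhds hμ₀V) (isOpen_ball.mem_nhds hμ₀D)
        filter_upwards [hnb] with ν hν
        exact hVP ν hν.1 (y ν) (LinearMap.mem_ker.2 (hyker ν hν.2))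
      have hzero := hgan.eqOn_zero_of_preconnected_of_eventuallyEq_zero
        (convex_ball μ₁ ρ).isPreconnected hμ₀D hev
      intro ν hν z hz
      obtain ⟨c, hc⟩ := span_ker ν (hballΩ hν) (y ν) (LinearMap.mem_ker.2 (hyker ν hν))
        (hyne ν hν) z hz
      rw [hc, map_smul]
      have : f (y ν) = 0 := hzero hν
      rw [this, smul_zero]
    -- 0 ∈ U
    have h0U : (0 : ℂ) ∈ U := by
      obtain ⟨ρ₁, hρ₁, hball₁⟩ := Metric.isOpen_iff.1 hop 0 h0
      have hSpos : (0 : ℝ) < ‖S‖ + 1 := by positivity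
      set ρ₀ : ℝ := min ρ₁ (‖S‖ + 1)⁻¹ with hρ₀
      have hρ₀pos : 0 < ρ₀ := lt_min hρ₁ (by positivity)
      have hballΩ : ball (0 : ℂ) ρ₀ ⊆ Ω :=
        (ball_subset_ball (min_le_left _ _)).trans hball₁
      have hsmall : ∀ ν ∈ ball (0 : ℂ) ρ₀, ‖ν • S‖ < 1 := by
        intro ν hν
        have h1 : ‖ν‖ < (‖S‖ + 1)⁻¹ := by
          have := mem_ball_iff_norm.1 hν
          simpa using lt_of_lt_of_le this (min_le_right _ _)
        calc ‖ν • S‖ ≤ ‖ν‖ * ‖S‖ := ContinuousLinearMap.opNorm_smul_le _ _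
          _ ≤ ‖ν‖ * (‖S‖ + 1) := by nlinarith [norm_nonneg ν]
          _ < (‖S‖ + 1)⁻¹ * (‖S‖ + 1) := mul_lt_mul_of_pos_right h1 hSpos
          _ = 1 := inv_mul_cancel₀ (ne_of_gt hSpos)
      refine ⟨ball 0 ρ₀, isOpen_ball, mem_ball_self hρ₀pos, hballΩ, ?_⟩
      intro ν hν z hz
      have hνS : ‖ν • S‖ < 1 := hsmall ν hν
      set yν := Ring.inverse ((1 : X →L[ℂ] X) - ν • S) x₀ with hyν
      have hsum : HasSum (fun n : ℕ => ((ν • S) ^ n) x₀) yν := by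
        have h1 : HasSum (fun n : ℕ => (ν • S) ^ n)
            (Ring.inverse ((1 : X →L[ℂ] X) - ν • S)) := hasSum_geom_series_inverse _ hνS
        exact h1.mapL ((ContinuousLinearMap.apply ℂ X) x₀)
      have hmem : yν ∈ M := by
        refine hMclosed.mem_of_tendsto hsum.tendsto_sum_nat
          (Filter.Eventually.of_forall fun n => ?_)
        refine Submodule.sum_mem _ fun k _ => ?_
        have h2 : ((ν • S) ^ k) x₀ = ν ^ k • ((S ^ k) x₀) := by
          rw [smul_pow, ContinuousLinearMap.smul_apply]
        rw [h2]
        exact Submodule.smul_mem _ _ (Submodule.le_topologicalClosure _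
          (Submodule.subset_span ⟨k, rfl⟩))
      have hf0 : f yν = 0 := hf yν hmem
      have hle := local_eigen T S hTS x₀ hker hνS
      have hyker : yν ∈ LinearMap.ker ((T - ν • (1 : X →L[ℂ] X) : X →L[ℂ] X) : X →ₗ[ℂ] X) :=
        LinearMap.mem_ker.2 hle.1
      have hyne : yν ≠ 0 := by
        intro h0'
        have h1 := hle.2
        rw [show Ring.inverse ((1 : X →L[ℂ] X) - ν • S) x₀ = yν from rfl, h0', map_zero] at h1
        exact hx₀ h1.symm
      obtain ⟨c, hc⟩ := span_ker ν (hballΩ hν) yν hyker hyne z hz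
      rw [hc, map_smul, hf0, smul_zero]
    -- Ω \ U is open
    have hVopen : IsOpen (Ω \ U) := by
      rw [Metric.isOpen_iff]
      rintro μ₁ ⟨hμ₁Ω, hμ₁U⟩
      obtain ⟨R, hR⟩ := exists_right_inverse_clm (T - μ₁ • (1 : X →L[ℂ] X))
        (hsurj μ₁ hμ₁Ω) (hfin μ₁ hμ₁Ω)
      have hKne : LinearMap.ker ((T - μ₁ • (1 : X →L[ℂ] X) : X →L[ℂ] X) : X →ₗ[ℂ] X) ≠ ⊥ := by
        intro h
        have := hfin μ₁ hμ₁Ω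
        rw [h] at this
        simp [finrank_bot] at this
      obtain ⟨x₁, hx₁K, hx₁⟩ := (Submodule.ne_bot_iff _).1 hKne
      obtain ⟨ρ₁, hρ₁, hball₁⟩ := Metric.isOpen_iff.1 hop μ₁ hμ₁Ω
      set ρ : ℝ := min ρ₁ (‖R‖ + 1)⁻¹ with hρdef
      have hρpos : 0 < ρ := lt_min hρ₁ (by positivity)
      have hballΩ : ball μ₁ ρ ⊆ Ω := (ball_subset_ball (min_le_left _ _)).trans hball₁
      have hRpos : (0 : ℝ) < ‖R‖ + 1 := by positivity
      have hsmall : ∀ t ∈ ball μ₁ ρ, ‖(t - μ₁) • R‖ < 1 := by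
        intro t ht
        have h1 : ‖t - μ₁‖ < (‖R‖ + 1)⁻¹ := by
          have := mem_ball_iff_norm.1 ht
          exact lt_of_lt_of_le this (min_le_right _ _)
        calc ‖(t - μ₁) • R‖ ≤ ‖t - μ₁‖ * ‖R‖ := ContinuousLinearMap.opNorm_smul_le _ _
          _ ≤ ‖t - μ₁‖ * (‖R‖ + 1) := by nlinarith [norm_nonneg (t - μ₁)]
          _ < (‖R‖ + 1)⁻¹ * (‖R‖ + 1) := mul_lt_mul_of_pos_right h1 hRpos
          _ = 1 := inv_mul_cancel₀ (ne_of_gt hRpos)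
      refine ⟨ρ, hρpos, ?_⟩
      intro ν hν
      refine ⟨hballΩ hν, fun hνU => hμ₁U ?_⟩
      have hPball := core μ₁ hμ₁Ω R hR x₁ hx₁ (LinearMap.mem_ker.1 hx₁K) ρ hρpos hballΩ
        hsmall ⟨ν, hν, hνU⟩
      exact ⟨ball μ₁ ρ, isOpen_ball, mem_ball_self hρpos, hballΩ, hPball⟩
    -- by connectedness, Ω ⊆ U
    have hΩU : Ω ⊆ U := by
      refine hconn.isPreconnected.subset_left_of_subset_union hUopen hVopen
        disjoint_sdiff_self_right ?_ ⟨0, h0, h0U⟩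
      intro μ hμ
      by_cases h : μ ∈ U
      · exact Or.inl h
      · exact Or.inr ⟨hμ, h⟩
    -- conclude f = 0
    have hPall : ∀ μ ∈ Ω, P μ := by
      intro μ hμ
      obtain ⟨V, _, hμV, _, hVP⟩ := hΩU hμ
      exact hVP μ hμV
    have hspan : Submodule.span ℂ
        (⋃ μ ∈ Ω, ((LinearMap.ker ((T - μ • (1 : X →L[ℂ] X) : X →L[ℂ] X) : X →ₗ[ℂ] X) : Submodule ℂ X) : Set X))
        ≤ LinearMap.ker (f : X →ₗ[ℂ] ℂ) := by
      rw [Submodule.span_le]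
      rintro y hy
      simp only [Set.mem_iUnion] at hy
      obtain ⟨μ, hμ, hyK⟩ := hy
      exact LinearMap.mem_ker.2 (hPall μ hμ y hyK)
    have hclos := Submodule.topologicalClosure_minimal _ hspan (ContinuousLinearMap.isClosed_ker f)
    rw [hdense] at hclos
    ext z
    simpa using LinearMap.mem_ker.1 (hclos (Submodule.mem_top (x := z)))
  -- conclude M = ⊤ from the claim via Hahn–Banach on the quotient
  by_contra hMne
  have hex : ∃ x : X, x ∉ M := by
    by_contra hall
    push_neg at hall
    exact hMne (Submodule.eq_top_iff'.2 hall)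
  obtain ⟨x, hx⟩ := hex
  haveI : IsClosed (M : Set X) := hMclosed
  have hxQ : (Submodule.Quotient.mk x : X ⧸ M) ≠ 0 := by
    simpa [Submodule.Quotient.mk_eq_zero] using hx
  obtain ⟨g, hg⟩ := SeparatingDual.exists_ne_zero (R := ℂ) hxQ
  set mkCLM : X →L[ℂ] (X ⧸ M) := LinearMap.mkContinuous M.mkQ 1
    (fun m => by simpa using Submodule.Quotient.norm_mk_le M m) with hmkCLM
  have hf := claim (g.comp mkCLM) (fun y hy => by
    have h1 : mkCLM y = 0 := by
      simp only [hmkCLM, LinearMap.mkContinuous_apply, Submodule.mkQ_apply]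
      exact (Submodule.Quotient.mk_eq_zero M).2 hy
    simp [h1])
  apply hg
  have h2 := congrArg (fun h : X →L[ℂ] ℂ => h x) hf
  simpa [hmkCLM] using h2
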